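/- arXiv:1903.06977 — 2 statements merged into one kernel-verified Lean document; each statement's English description precedes it below -/
import Mathlib

section
/- Let (X, μ, T) be a measure-preserving dynamical system with X ⊆ ℝ an interval and μ a probability measure, and suppose correlations decay as p for L¹ against BV: |∫ f∘Tⁿ · g dμ − ∫ f dμ ∫ g dμ| ≤ ‖f‖₁ ‖g‖_BV p(n) for all n ≥ 1 and all f ∈ L¹(μ), g of bounded variation. Suppose p(n) ≤ C e^{−τn} for some C ≥ 0 and τ > 0. Let (B_m)_{m≥1} be a sequence of balls (intervals) in X with μ(B_m) → 0. If μ(B_m) ≥ c (log m)²/m for some c > 1/τ and all sufficiently large m, then μ(E_ah) = 1. -/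
open MeasureTheory Filter Set
open scoped ENNReal

/-- The set of eventually always hitting points: there is `m₀` such that for every
`m ≥ m₀` the orbit segment `x, T x, …, T^[m-1] x` meets `B m`. -/
def eahSet {X : Type*} (T : X → X) (B : ℕ → Set X) : Set X :=
  {x | ∃ m₀ : ℕ, ∀ m : ℕ, m₀ ≤ m → ∃ k : ℕ, k < m ∧ T^[k] x ∈ B m}

/-- The BV norm of `g` on `X` with respect to `μ`: total variation plus `L¹` norm. -/
noncomputable def bvNorm (X : Set ℝ) (μ : MeasureTheory.Measure ℝ) (g : ℝ → ℝ) : ℝ :=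
  (eVariationOn g X).toReal + ∫ x, |g x| ∂μ

lemma auxMonoSum (v : ℕ → ℝ) (hv : Monotone v) (h0 : ∀ i, 0 ≤ v i) (h1 : ∀ i, v i ≤ 1)
    (n : ℕ) : ∑ i ∈ Finset.range n, edist (v (i+1)) (v i) ≤ 1 := by
  have key : ∀ n, ∑ i ∈ Finset.range n, edist (v (i+1)) (v i)
      = ENNReal.ofReal (v n - v 0) := by
    intro n
    induction n with
    | zero => simp
    | succ n ih =>
      rw [Finset.sum_range_succ, ih, edist_dist, Real.dist_eq,
        abs_of_nonneg (sub_nonneg.2 (hv (Nat.le_succ n))),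
        ← ENNReal.ofReal_add (sub_nonneg.2 (hv (Nat.zero_le n)))
          (sub_nonneg.2 (hv (Nat.le_succ n)))]
      congr 1
      ring
  rw [key]
  rw [show (1 : ℝ≥0∞) = ENNReal.ofReal 1 by simp]
  exact ENNReal.ofReal_le_ofReal (by have := h1 n; have := h0 0; linarith)

lemma edistSubLe (a b c d : ℝ) : edist (a - b) (c - d) ≤ edist a c + edist b d := by
  simp only [edist_dist, Real.dist_eq]
  rw [← ENNReal.ofReal_add (abs_nonneg _) (abs_nonneg _)]
  refine ENNReal.ofReal_le_ofReal ?_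
  calc |a - b - (c - d)| = |(a - c) - (b - d)| := by ring_nf
  _ ≤ |a - c| + |b - d| := abs_sub _ _

lemma evarIndicatorIoo (a b : ℝ) :
    eVariationOn ((Set.Ioo a b).indicator (1 : ℝ → ℝ)) Set.univ ≤ 2 := by
  rcases le_or_gt b a with hba | hab
  · rw [Set.Ioo_eq_empty (not_lt.2 hba), Set.indicator_empty]
    refine le_trans (le_of_eq (eVariationOn.constant_on ?_)) (by norm_num)
    rintro x ⟨x', -, rfl⟩ y ⟨y', -, rfl⟩; rfl
  · set h1 : ℝ → ℝ := (Set.Ioi a).indicator 1 with hh1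
    set h2 : ℝ → ℝ := (Set.Ici b).indicator 1 with hh2
    have hdecomp : ∀ x, (Set.Ioo a b).indicator (1 : ℝ → ℝ) x = h1 x - h2 x := by
      intro x
      rcases lt_or_ge x b with hxb | hxb
      · rcases le_or_gt x a with hxa | hxa
        · have m1 : x ∉ Set.Ioo a b := by simp only [Set.mem_Ioo]; intro h; linarith
          have m2 : x ∉ Set.Ioi a := by simpa using hxa
          have m3 : x ∉ Set.Ici b := by simp only [Set.mem_Ici]; linarith
          rw [hh1, hh2, Set.indicator_of_notMem m1, Set.indicator_of_notMem m2,
            Set.indicator_of_notMem m3]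
          norm_num
        · have m1 : x ∈ Set.Ioo a b := ⟨hxa, hxb⟩
          have m2 : x ∈ Set.Ioi a := hxa
          have m3 : x ∉ Set.Ici b := by simp only [Set.mem_Ici]; linarith
          rw [hh1, hh2, Set.indicator_of_mem m1, Set.indicator_of_mem m2,
            Set.indicator_of_notMem m3]
          norm_num
      · have m1 : x ∉ Set.Ioo a b := by simp only [Set.mem_Ioo]; intro h; linarith
        have m2 : x ∈ Set.Ioi a := by simp only [Set.mem_Ioi]; linarith
        have m3 : x ∈ Set.Ici b := hxb
        rw [hh1, hh2, Set.indicator_of_notMem m1, Set.indicator_of_mem m2,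
          Set.indicator_of_mem m3]
        norm_num
    rw [eVariationOn]
    refine iSup_le ?_
    rintro ⟨n, u, hu, -⟩
    have hmono1 : Monotone (fun i => h1 (u i)) := by
      intro i j hij
      simp only [hh1, Set.indicator_apply, Set.mem_Ioi]
      by_cases hi : a < u i
      · have hj : a < u j := lt_of_lt_of_le hi (hu hij)
        simp [hi, hj]
      · by_cases hj : a < u j <;> simp [hi, hj]
    have hmono2 : Monotone (fun i => h2 (u i)) := by
      intro i j hij
      simp only [hh2, Set.indicator_apply, Set.mem_Ici]
      by_cases hi : b ≤ u i
      · have hj : b ≤ u j := le_trans hi (hu hij)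
        simp [hi, hj]
      · by_cases hj : b ≤ u j <;> simp [hi, hj]
    have hb1 : ∀ (s : Set ℝ) (x : ℝ), 0 ≤ s.indicator (1 : ℝ → ℝ) x ∧ s.indicator (1:ℝ→ℝ) x ≤ 1 := by
      intro s x
      constructor
      · exact Set.indicator_nonneg (by intro _ _; norm_num) x
      · by_cases h : x ∈ s <;> simp [Set.indicator_apply, h]
    calc ∑ i ∈ Finset.range n,
          edist ((Set.Ioo a b).indicator (1:ℝ→ℝ) (u (i+1))) ((Set.Ioo a b).indicator (1:ℝ→ℝ) (u i))
        ≤ ∑ i ∈ Finset.range n, (edist (h1 (u (i+1))) (h1 (u i)) + edist (h2 (u (i+1))) (h2 (u i))) := by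
          refine Finset.sum_le_sum fun i _ => ?_
          rw [hdecomp, hdecomp]
          exact edistSubLe _ _ _ _
      _ = (∑ i ∈ Finset.range n, edist (h1 (u (i+1))) (h1 (u i)))
          + ∑ i ∈ Finset.range n, edist (h2 (u (i+1))) (h2 (u i)) := Finset.sum_add_distrib
      _ ≤ 1 + 1 := by
          refine add_le_add ?_ ?_
          · exact auxMonoSum _ hmono1 (fun i => (hb1 _ _).1) (fun i => (hb1 _ _).2) n
          · exact auxMonoSum _ hmono2 (fun i => (hb1 _ _).1) (fun i => (hb1 _ _).2) n
      _ = 2 := by norm_num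

lemma missBound
    (X : Set ℝ) (μ : Measure ℝ) [IsProbabilityMeasure μ]
    (T : ℝ → ℝ) (hT : MeasurePreserving T μ μ)
    (p : ℕ → ℝ)
    (hcorr : ∀ n : ℕ, 1 ≤ n → ∀ f g : ℝ → ℝ, Integrable f μ →
      eVariationOn g X ≠ ∞ →
      |(∫ x, f (T^[n] x) * g x ∂μ) - (∫ x, f x ∂μ) * ∫ x, g x ∂μ| ≤
        (∫ x, |f x| ∂μ) * bvNorm X μ g * p n)
    (a b : ℝ) (s : ℕ) (hs : 1 ≤ s) (Q : ℝ) (hQ0 : 0 ≤ Q) (hpsQ : p s ≤ Q) :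
    ∀ K : ℕ, (μ (⋂ i ∈ Finset.range K, (T^[i*s])⁻¹' (Set.Ioo a b)ᶜ)).toReal ≤
      (max (1 - (μ (Set.Ioo a b)).toReal + 3*Q) 0) ^ K := by
  have hTms : ∀ n, Measurable (T^[n]) := fun n => hT.measurable.iterate n
  have hIm : MeasurableSet (Set.Ioo a b) := measurableSet_Ioo
  set I := Set.Ioo a b with hI
  set bb := (μ I).toReal with hbb
  set ρ := max (1 - bb + 3*Q) 0 with hρ
  have hρ0 : (0:ℝ) ≤ ρ := le_max_right _ _
  intro K
  induction K with
  | zero => simp [hρ]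
  | succ K ih =>
    have hDKm : MeasurableSet (⋂ i ∈ Finset.range K, (T^[i*s])⁻¹' Iᶜ) :=
      Finset.measurableSet_biInter _ (fun i _ => (hTms (i*s)) hIm.compl)
    set DK := ⋂ i ∈ Finset.range K, (T^[i*s])⁻¹' Iᶜ with hDK
    set S := (T^[s])⁻¹' DK with hSdef
    have hSm : MeasurableSet S := (hTms s) hDKm
    have hstep : (⋂ i ∈ Finset.range (K+1), (T^[i*s])⁻¹' Iᶜ) = Iᶜ ∩ S := by
      ext x
      simp only [Set.mem_iInter, Finset.mem_range, Set.mem_inter_iff, Set.mem_preimage,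
        Set.mem_compl_iff, hSdef, hDK]
      constructor
      · intro h
        refine ⟨by simpa using h 0 (Nat.succ_pos K), fun i hi => ?_⟩
        have := h (i+1) (by omega)
        rwa [show (i+1)*s = i*s + s by ring, Function.iterate_add_apply] at this
      · rintro ⟨h0, h⟩ i hi
        rcases Nat.eq_zero_or_pos i with rfl | hipos
        · simpa using h0
        · obtain ⟨j, rfl⟩ : ∃ j, i = j + 1 := ⟨i-1, by omega⟩
          have := h j (by omega)
          rwa [show (j+1)*s = j*s + s by ring, Function.iterate_add_apply]
    set dK := (μ DK).toReal with hdK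
    have hdK0 : (0:ℝ) ≤ dK := ENNReal.toReal_nonneg
    set q := (μ (S ∩ I)).toReal with hqdef
    have hq : q + (μ (S \ I)).toReal = (μ S).toReal := by
      rw [hqdef, ← ENNReal.toReal_add (measure_ne_top μ _) (measure_ne_top μ _),
        measure_inter_add_diff S hIm]
    have hS : (μ S).toReal = dK := by
      rw [hSdef, (hT.iterate s).measure_preimage hDKm.nullMeasurableSet]
    have hcompl : Iᶜ ∩ S = S \ I := by rw [Set.diff_eq, Set.inter_comm]
    have hf : Integrable (DK.indicator (1:ℝ→ℝ)) μ := (integrable_const (1:ℝ)).indicator hDKm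
    have hvar2 : eVariationOn (I.indicator (1:ℝ→ℝ)) X ≤ 2 :=
      le_trans (eVariationOn.mono _ (Set.subset_univ X)) (evarIndicatorIoo a b)
    have hvar : eVariationOn (I.indicator (1:ℝ→ℝ)) X ≠ ∞ :=
      ne_top_of_le_ne_top (by norm_num) hvar2
    have hcor := hcorr s hs (DK.indicator 1) (I.indicator 1) hf hvar
    have e1 : (fun x => (DK.indicator (1:ℝ→ℝ)) (T^[s] x) * ((I.indicator (1:ℝ→ℝ)) x))
        = (S ∩ I).indicator (1:ℝ→ℝ) := by
      rw [Set.inter_indicator_one]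
      funext x
      by_cases h : x ∈ I <;> by_cases h2 : T^[s] x ∈ DK <;>
        simp [h, h2, Set.indicator_apply, Set.mem_preimage, hSdef]
    have i1 : ∫ x, (DK.indicator (1:ℝ→ℝ)) (T^[s] x) * ((I.indicator (1:ℝ→ℝ)) x) ∂μ = q := by
      rw [show (fun x => (DK.indicator (1:ℝ→ℝ)) (T^[s] x) * ((I.indicator (1:ℝ→ℝ)) x))
        = (S ∩ I).indicator (1:ℝ→ℝ) from e1]
      exact integral_indicator_one (hSm.inter hIm)
    have i2 : ∫ x, DK.indicator (1:ℝ→ℝ) x ∂μ = dK := integral_indicator_one hDKm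
    have i3 : ∫ x, I.indicator (1:ℝ→ℝ) x ∂μ = bb := integral_indicator_one hIm
    have habs_ind : ∀ (E : Set ℝ), (fun x => |E.indicator (1:ℝ→ℝ) x|) = E.indicator (1:ℝ→ℝ) :=
      fun E => funext fun x => abs_of_nonneg (Set.indicator_nonneg (fun _ _ => zero_le_one) x)
    have i4 : ∫ x, |DK.indicator (1:ℝ→ℝ) x| ∂μ = dK := by
      rw [habs_ind]; exact integral_indicator_one hDKm
    set bv := bvNorm X μ (I.indicator (1:ℝ→ℝ)) with hbvdef
    have hbv0 : 0 ≤ bv :=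
      add_nonneg ENNReal.toReal_nonneg (integral_nonneg fun x => abs_nonneg _)
    have hbv3 : bv ≤ 3 := by
      rw [hbvdef, bvNorm]
      have h2 : (eVariationOn (I.indicator (1:ℝ→ℝ)) X).toReal ≤ 2 := by
        calc (eVariationOn (I.indicator (1:ℝ→ℝ)) X).toReal
            ≤ (2:ℝ≥0∞).toReal := ENNReal.toReal_mono (by norm_num) hvar2
          _ = 2 := by norm_num
      have h1 : ∫ x, |I.indicator (1:ℝ→ℝ) x| ∂μ ≤ 1 := by
        rw [habs_ind, i3, hbb]
        calc (μ I).toReal ≤ (1:ℝ≥0∞).toReal := ENNReal.toReal_mono (by norm_num) prob_le_one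
          _ = 1 := by norm_num
      linarith
    rw [i1, i2, i3, i4] at hcor
    have hbnd : dK * bv * p s ≤ dK * (3*Q) := by
      rcases le_or_gt 0 (p s) with hpp | hpp
      · have h1 : bv * p s ≤ 3 * Q := mul_le_mul hbv3 hpsQ hpp (by norm_num)
        calc dK * bv * p s = dK * (bv * p s) := by ring
          _ ≤ dK * (3*Q) := mul_le_mul_of_nonneg_left h1 hdK0
      · have h1 : dK * bv * p s ≤ 0 :=
          mul_nonpos_of_nonneg_of_nonpos (mul_nonneg hdK0 hbv0) hpp.le
        have h2 : 0 ≤ dK * (3*Q) := mul_nonneg hdK0 (by positivity)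
        linarith
    have hql : dK*bb - dK*(3*Q) ≤ q := by
      have habs := (abs_le.1 hcor).1
      linarith
    calc (μ (⋂ i ∈ Finset.range (K+1), (T^[i*s])⁻¹' Iᶜ)).toReal
        = (μ (S \ I)).toReal := by rw [hstep, hcompl]
      _ = dK - q := by linarith [hq, hS]
      _ ≤ dK*(1 - bb + 3*Q) := by nlinarith [hql]
      _ ≤ dK * ρ := mul_le_mul_of_nonneg_left (le_max_left _ _) hdK0
      _ ≤ ρ^K * ρ := mul_le_mul_of_nonneg_right ih hρ0
      _ = ρ^(K+1) := (pow_succ ρ K).symm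

set_option maxHeartbeats 2000000 in
/-- Exponential decay of correlations for `L¹` against `BV` implies that the set of
eventually always hitting points has full measure, provided
`μ (B m) ≥ c (log m)² / m` with `c > 1/τ` for all sufficiently large `m`. -/
theorem eah_full_exp_mixing
    (X : Set ℝ) (hX : X.OrdConnected)
    (μ : Measure ℝ) [IsProbabilityMeasure μ] (hsupp : μ Xᶜ = 0)
    (T : ℝ → ℝ) (hT : MeasurePreserving T μ μ)
    (p : ℕ → ℝ) (C τ : ℝ) (hC : 0 ≤ C) (hτ : 0 < τ)
    (hp : ∀ n : ℕ, 1 ≤ n → p n ≤ C * Real.exp (-τ * n))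
    (hcorr : ∀ n : ℕ, 1 ≤ n → ∀ f g : ℝ → ℝ, Integrable f μ →
      eVariationOn g X ≠ ∞ →
      |(∫ x, f (T^[n] x) * g x ∂μ) - (∫ x, f x ∂μ) * ∫ x, g x ∂μ| ≤
        (∫ x, |f x| ∂μ) * bvNorm X μ g * p n)
    (y : ℕ → ℝ) (hy : ∀ m, y m ∈ X) (r : ℕ → ℝ) (hr : ∀ m, 0 ≤ r m)
    (B : ℕ → Set ℝ) (hB : ∀ m, B m = Metric.ball (y m) (r m) ∩ X)
    (hlim : Tendsto (fun m => μ (B m)) atTop (nhds 0))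
    (c : ℝ) (hc : 1 / τ < c)
    (hbig : ∃ M : ℕ, ∀ m : ℕ, M ≤ m →
      ENNReal.ofReal (c * (Real.log m) ^ 2 / m) ≤ μ (B m)) :
    μ (eahSet T B) = 1 := by
  classical
  obtain ⟨M0, hM0⟩ := hbig
  have hcτ : 1 < c * τ := by
    rw [div_lt_iff₀ hτ] at hc; linarith
  have h1τ : 0 < 1/τ := by positivity
  have hc0 : 0 < c := lt_trans h1τ hc
  have hcτ0 : 0 < c*τ := by positivity
  set δ : ℝ := (c*τ - 1)/(2*(c*τ)) with hδdef
  have hδ0 : 0 < δ := div_pos (by linarith) (by linarith)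
  have hδ1 : δ < 1 := by
    rw [hδdef, div_lt_one (by linarith)]; linarith
  have hγ : (1-δ)*(c*τ) = (c*τ+1)/2 := by
    have h := div_mul_cancel₀ (c*τ-1) (ne_of_gt (by positivity : (0:ℝ) < 2*(c*τ)))
    rw [← hδdef] at h; linarith
  set β : ℝ := (c*τ+3)/4 with hβdef
  have hβ1 : 1 < β := by rw [hβdef]; linarith
  have hβγ : β < (1-δ)*(c*τ) := by rw [hγ, hβdef]; linarith
  set C' := max C 1 with hC'
  have hC'1 : (1:ℝ) ≤ C' := le_max_right _ _
  have hC'0 : (0:ℝ) < C' := by linarith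
  set L : ℝ := max (Real.log (3*C'/(δ*c))) 0 with hL
  have hL0 : (0:ℝ) ≤ L := le_max_right _ _
  set s : ℕ → ℕ := fun m => ⌈(Real.log m + L)/τ⌉₊ + 1 with hsdef
  have hs1 : ∀ m, 1 ≤ s m := fun m => Nat.le_add_left 1 _
  set A : ℕ → Set ℝ := fun m => {x | ∀ k, k < m → T^[k] x ∉ B m} with hA
  set G : Set ℝ := ⋂ k : ℕ, (T^[k])⁻¹' X with hG
  have hXm : MeasurableSet X := hX.measurableSet
  have hGc : μ Gᶜ = 0 := by
    rw [hG, Set.compl_iInter]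
    refine measure_iUnion_null fun k => ?_
    rw [← Set.preimage_compl, (hT.iterate k).measure_preimage hXm.compl.nullMeasurableSet]
    exact hsupp
  -- tendsto facts
  have hlog_at : Tendsto (fun m : ℕ => Real.log m) atTop atTop :=
    Real.tendsto_log_atTop.comp tendsto_natCast_atTop_atTop
  have hlogm0 : Tendsto (fun m : ℕ => Real.log m / m) atTop (nhds 0) := by
    have h := Real.isLittleO_log_id_atTop.tendsto_div_nhds_zero
    exact (h.comp tendsto_natCast_atTop_atTop)
  have hgen : ∀ k : ℝ, Tendsto (fun x : ℝ => x/((x + L)/τ + k)) atTop (nhds τ) := by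
    intro k
    have h1 : Tendsto (fun x : ℝ => ((x + L)/τ + k)/x) atTop (nhds (1/τ)) := by
      have heq : (fun x : ℝ => 1/τ + (L/τ + k)/x) =ᶠ[atTop] fun x => ((x + L)/τ + k)/x := by
        filter_upwards [eventually_gt_atTop (0:ℝ)] with x hx
        field_simp
        ring
      refine Tendsto.congr' heq ?_
      have h0 : Tendsto (fun x:ℝ => (L/τ + k)/x) atTop (nhds 0) := by
        simpa [div_eq_mul_inv] using tendsto_inv_atTop_zero.const_mul (L/τ + k)
      simpa using (tendsto_const_nhds (α := ℝ) (x := 1/τ) (f := atTop)).add h0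
    have h2 := h1.inv₀ (by positivity : (1:ℝ)/τ ≠ 0)
    have heq2 : (fun x : ℝ => (((x + L)/τ + k)/x)⁻¹) = fun x => x/((x + L)/τ + k) := by
      funext x; rw [inv_div]
    rw [heq2] at h2
    simpa [one_div, inv_inv] using h2
  have hsqueeze : Tendsto (fun m : ℕ => Real.log m / (s m : ℝ)) atTop (nhds τ) := by
    have hup := (hgen 1).comp hlog_at
    have hlow := (hgen 2).comp hlog_at
    refine tendsto_of_tendsto_of_tendsto_of_le_of_le' hlow hup ?_ ?_
    · filter_upwards [hlog_at.eventually_ge_atTop 0] with m hm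
      have hx0 : 0 ≤ (Real.log m + L)/τ := by positivity
      have hceil : ((s m : ℕ) : ℝ) < (Real.log m + L)/τ + 2 := by
        have h := Nat.ceil_lt_add_one hx0
        rw [hsdef]; push_cast; linarith
      have hs_pos : (0:ℝ) < (s m : ℝ) := by
        have := hs1 m; exact_mod_cast Nat.lt_of_lt_of_le Nat.zero_lt_one this
      exact div_le_div_of_nonneg_left hm hs_pos hceil.le
    · filter_upwards [hlog_at.eventually_ge_atTop 0] with m hm
      have hge : (Real.log m + L)/τ + 1 ≤ ((s m : ℕ) : ℝ) := by
        have h := Nat.le_ceil ((Real.log m + L)/τ)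
        rw [hsdef]; push_cast; linarith
      have hden_pos : 0 < (Real.log m + L)/τ + 1 := by positivity
      exact div_le_div_of_nonneg_left hm hden_pos hge
  have hmain : Tendsto (fun m : ℕ => (1-δ)*c*(Real.log m/(s m : ℝ) - Real.log m / m))
      atTop (nhds ((1-δ)*(c*τ))) := by
    have h := (hsqueeze.sub hlogm0).const_mul ((1-δ)*c)
    have heq : (1-δ)*c*(τ - 0) = (1-δ)*(c*τ) := by ring
    rwa [heq] at h
  have hEv2 : ∀ᶠ m : ℕ in atTop, β ≤ (1-δ)*c*(Real.log m/(s m:ℝ) - Real.log m/m) :=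
    hmain.eventually (eventually_ge_nhds hβγ)
  -- main eventual estimate
  have hfinal : ∀ᶠ m : ℕ in atTop, μ (A m) ≤ ENNReal.ofReal ((m:ℝ)^(-β)) := by
    filter_upwards [hEv2, eventually_ge_atTop (max M0 1), hlog_at.eventually_ge_atTop 1]
      with m hm2 hmM hlog1
    have hmM0 : M0 ≤ m := le_trans (le_max_left _ _) hmM
    have hm0 : 0 < m := le_trans (le_max_right _ _) hmM
    have hm0R : (0:ℝ) < m := by exact_mod_cast hm0
    set lg := Real.log m with hlg
    have hblow : c * lg^2 / m ≤ (μ (B m)).toReal := by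
      have h := hM0 m hmM0
      have h0 : 0 ≤ c * lg^2 / m := by positivity
      calc c * lg^2/m = (ENNReal.ofReal (c*lg^2/m)).toReal := (ENNReal.toReal_ofReal h0).symm
        _ ≤ (μ (B m)).toReal := ENNReal.toReal_mono (measure_ne_top μ _) h
    set bb := (μ (B m)).toReal with hbbdef
    have hball : Metric.ball (y m) (r m) = Set.Ioo (y m - r m) (y m + r m) :=
      Real.ball_eq_Ioo _ _
    have hμI : μ (Set.Ioo (y m - r m) (y m + r m)) = μ (B m) := by
      refine le_antisymm ?_ (measure_mono ?_)
      · calc μ (Set.Ioo (y m - r m) (y m + r m)) ≤ μ (B m ∪ Xᶜ) := by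
              refine measure_mono fun x hx => ?_
              by_cases hxX : x ∈ X
              · left; rw [hB m]; exact ⟨hball ▸ hx, hxX⟩
              · right; exact hxX
          _ ≤ μ (B m) + μ Xᶜ := measure_union_le _ _
          _ = μ (B m) := by rw [hsupp, add_zero]
      · rw [hB m, hball]; exact Set.inter_subset_left
    set Qm := C' * Real.exp (-τ * (s m)) with hQm
    have hQm0 : 0 ≤ Qm := by positivity
    have hps : p (s m) ≤ Qm := by
      refine le_trans (hp (s m) (hs1 m)) ?_
      exact mul_le_mul_of_nonneg_right (le_max_left _ _) (Real.exp_nonneg _)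
    have hτs : lg + L ≤ τ * (s m) := by
      have hceil := Nat.le_ceil ((lg + L)/τ)
      have h1 : (lg + L)/τ ≤ ((s m : ℕ) : ℝ) := by rw [hsdef]; push_cast; linarith [hceil]
      calc lg + L = ((lg+L)/τ)*τ := by field_simp
        _ ≤ ((s m : ℕ):ℝ)*τ := mul_le_mul_of_nonneg_right h1 hτ.le
        _ = τ * (s m) := mul_comm _ _
    have hQsmall : 3 * Qm ≤ δ * bb := by
      have h3 : Real.exp (-L) ≤ δ * c/(3*C') := by
        have hpos : 0 < 3*C'/(δ*c) := by positivity
        have hLlog : Real.log (3*C'/(δ*c)) ≤ L := le_max_left _ _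
        have h4 : 3*C'/(δ*c) ≤ Real.exp L := by
          rw [← Real.exp_log hpos]; exact Real.exp_le_exp.2 hLlog
        rw [Real.exp_neg, show δ * c/(3*C') = (3*C'/(δ*c))⁻¹ by rw [inv_div]]
        exact inv_anti₀ hpos h4
      have hexp : Real.exp (-τ*(s m)) ≤ (1/m)*(δ*c/(3*C')) := by
        calc Real.exp (-τ*(s m)) ≤ Real.exp (-(lg + L)) := Real.exp_le_exp.2 (by linarith)
          _ = (1/m) * Real.exp (-L) := by
              rw [neg_add, Real.exp_add, Real.exp_neg, Real.exp_log hm0R, one_div]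
          _ ≤ (1/m)*(δ*c/(3*C')) := mul_le_mul_of_nonneg_left h3 (by positivity)
      have h5 : 3 * Qm ≤ δ * c / m := by
        have := mul_le_mul_of_nonneg_left hexp (by positivity : (0:ℝ) ≤ 3*C')
        calc 3 * Qm = 3*C' * Real.exp (-τ*(s m)) := by rw [hQm]; ring
          _ ≤ 3*C'*((1/m)*(δ*c/(3*C'))) := this
          _ = δ * c / m := by field_simp
      have h6 : δ * c / m ≤ δ * (c * lg^2/m) := by
        have hlg2 : 1 ≤ lg^2 := by nlinarith
        have hcc : c ≤ c * lg^2 := by nlinarith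
        rw [mul_div_assoc]
        gcongr
      have h7 : δ * (c * lg^2/m) ≤ δ * bb := mul_le_mul_of_nonneg_left hblow hδ0.le
      linarith
    set K := m / s m with hK
    have hmiss := missBound X μ T hT p hcorr (y m - r m) (y m + r m) (s m) (hs1 m)
      Qm hQm0 hps K
    set D := ⋂ i ∈ Finset.range K, (T^[i*(s m)])⁻¹' (Set.Ioo (y m - r m) (y m + r m))ᶜ with hD
    have hsub : A m ⊆ D ∪ Gᶜ := by
      intro x hx
      by_cases hxG : x ∈ G
      · left
        rw [hD]
        simp only [Set.mem_iInter, Finset.mem_range, Set.mem_preimage, Set.mem_compl_iff]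
        intro i hi hmem
        have hks : i*(s m) < m := by
          have h1 : (i+1) * s m ≤ K * s m := Nat.mul_le_mul_right _ (by omega)
          have h2 : K * s m ≤ m := Nat.div_mul_le_self m (s m)
          have h3 : (i+1)*s m = i * s m + s m := by ring
          have h4 := hs1 m
          omega
        have hxX : T^[i*(s m)] x ∈ X := by
          have := Set.mem_iInter.1 hxG (i*(s m))
          exact this
        have hBmem : T^[i*(s m)] x ∈ B m := by rw [hB m, hball]; exact ⟨hmem, hxX⟩
        exact hx _ hks hBmem
      · right; exact hxG
    have hμA : μ (A m) ≤ μ D := by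
      calc μ (A m) ≤ μ (D ∪ Gᶜ) := measure_mono hsub
        _ ≤ μ D + μ Gᶜ := measure_union_le _ _
        _ = μ D := by rw [hGc, add_zero]
    have hρle : max (1 - (μ (Set.Ioo (y m - r m) (y m + r m))).toReal + 3*Qm) 0
        ≤ Real.exp (-((1-δ)*bb)) := by
      rw [hμI]
      refine max_le ?_ (Real.exp_pos _).le
      have h1 : 1 - bb + 3*Qm ≤ 1 - (1-δ)*bb := by nlinarith [hQsmall]
      calc 1 - bb + 3*Qm ≤ 1 - (1-δ)*bb := h1
        _ ≤ Real.exp (-((1-δ)*bb)) := by linarith [Real.add_one_le_exp (-((1-δ)*bb))]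
    have hexpK : (μ D).toReal ≤ Real.exp (-((1-δ)*bb*K)) := by
      calc (μ D).toReal ≤ (max (1 - (μ (Set.Ioo (y m - r m) (y m + r m))).toReal + 3*Qm) 0)^K :=
            hmiss
        _ ≤ (Real.exp (-((1-δ)*bb)))^K := pow_le_pow_left₀ (le_max_right _ _) hρle K
        _ = Real.exp (-((1-δ)*bb*K)) := by
            rw [← Real.exp_nat_mul]
            congr 1
            ring
    have hKreal : (m : ℝ)/(s m) - 1 ≤ (K:ℝ) := by
      have hmod := Nat.div_add_mod m (s m)
      have hspos : 0 < s m := hs1 m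
      have hmlt : m % (s m) < s m := Nat.mod_lt _ hspos
      have hsR : (0:ℝ) < ((s m : ℕ):ℝ) := by exact_mod_cast hspos
      have hcast : ((s m : ℕ):ℝ) * (K:ℝ) + ((m % (s m) : ℕ):ℝ) = (m:ℝ) := by
        rw [hK]; exact_mod_cast congrArg (Nat.cast : ℕ → ℝ) hmod
      have hmltR : ((m % (s m) : ℕ):ℝ) < ((s m:ℕ):ℝ) := by exact_mod_cast hmlt
      have hlt : (m:ℝ) < ((s m:ℕ):ℝ) * ((K:ℝ) + 1) := by nlinarith
      have h2 : (m:ℝ)/(s m) ≤ (K:ℝ)+1 := by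
        rw [div_le_iff₀ hsR]; nlinarith
      linarith
    have hexp_ge : β * lg ≤ (1-δ)*bb*K := by
      have hK0 : (0:ℝ) ≤ (K:ℝ) := Nat.cast_nonneg _
      have hco : 0 ≤ (1-δ)*(c*lg^2/((m:ℝ))) := mul_nonneg (by linarith) (by positivity)
      have h1 : (1-δ)*(c*lg^2/m)*K ≤ (1-δ)*bb*K := by
        refine mul_le_mul_of_nonneg_right ?_ hK0
        exact mul_le_mul_of_nonneg_left hblow (by linarith)
      have h2 : (1-δ)*(c*lg^2/m)*((m:ℝ)/(s m) - 1) ≤ (1-δ)*(c*lg^2/m)*K :=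
        mul_le_mul_of_nonneg_left hKreal hco
      have hsR : ((s m:ℕ):ℝ) ≠ 0 := by
        have := hs1 m
        positivity
      have h3 : (1-δ)*(c*lg^2/m)*((m:ℝ)/(s m) - 1)
          = ((1-δ)*c*(lg/(s m) - lg/m))*lg := by
        field_simp
      have h4 : β * lg ≤ ((1-δ)*c*(lg/(s m) - lg/m))*lg :=
        mul_le_mul_of_nonneg_right hm2 (by linarith)
      linarith
    calc μ (A m) ≤ μ D := hμA
      _ = ENNReal.ofReal ((μ D).toReal) := (ENNReal.ofReal_toReal (measure_ne_top μ _)).symm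
      _ ≤ ENNReal.ofReal (Real.exp (-((1-δ)*bb*K))) := ENNReal.ofReal_le_ofReal hexpK
      _ ≤ ENNReal.ofReal (Real.exp (-(β*lg))) :=
          ENNReal.ofReal_le_ofReal (Real.exp_le_exp.2 (by linarith))
      _ = ENNReal.ofReal ((m:ℝ)^(-β)) := by
          rw [Real.rpow_def_of_pos hm0R, hlg]
          congr 1
          ring
  -- Borel--Cantelli
  obtain ⟨M1, hM1⟩ := eventually_atTop.1 hfinal
  have hsum : ∑' m, μ (A m) ≠ ∞ := by
    have h0 : Summable (fun n : ℕ => (n:ℝ)^(-β)) := Real.summable_nat_rpow.2 (by linarith)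
    have hsummable : Summable (fun i : ℕ => ((i + M1 : ℕ):ℝ)^(-β)) :=
      (summable_nat_add_iff M1).2 h0
    rw [← Summable.sum_add_tsum_nat_add' (f := fun m => μ (A m)) (k := M1) ENNReal.summable]
    refine ENNReal.add_ne_top.2 ⟨?_, ?_⟩
    · exact (ENNReal.sum_lt_top.2 fun i _ => measure_lt_top μ _).ne
    · have hle : ∑' i, μ (A (i + M1)) ≤ ∑' i : ℕ, ENNReal.ofReal (((i + M1:ℕ):ℝ)^(-β)) :=
        ENNReal.tsum_le_tsum fun i => hM1 (i + M1) (Nat.le_add_left _ _)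
      refine ne_of_lt (lt_of_le_of_lt hle ?_)
      rw [← ENNReal.ofReal_tsum_of_nonneg (fun n => Real.rpow_nonneg (Nat.cast_nonneg _) _)
        hsummable]
      exact ENNReal.ofReal_lt_top
  have hlimsupA : μ (limsup A atTop) = 0 := measure_limsup_atTop_eq_zero hsum
  have hcomplsub : (eahSet T B)ᶜ ⊆ limsup A atTop := by
    intro x hx
    rw [mem_limsup_iff_frequently_mem, frequently_atTop]
    intro m₀
    simp only [eahSet, Set.mem_compl_iff, Set.mem_setOf_eq, not_exists] at hx
    have h := hx m₀
    push_neg at h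
    obtain ⟨m, hm₀, hmiss⟩ := h
    refine ⟨m, hm₀, ?_⟩
    intro k hk hmem
    exact hmiss k hk hmem
  have h0 : μ (eahSet T B)ᶜ = 0 := measure_mono_null hcomplsub hlimsupA
  have h1 : (1:ℝ≥0∞) ≤ μ (eahSet T B) := by
    calc (1:ℝ≥0∞) = μ Set.univ := measure_univ.symm
      _ ≤ μ (eahSet T B ∪ (eahSet T B)ᶜ) := measure_mono (by rw [Set.union_compl_self])
      _ ≤ μ (eahSet T B) + μ (eahSet T B)ᶜ := measure_union_le _ _
      _ = μ (eahSet T B) := by rw [h0, add_zero]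
  exact le_antisymm prob_le_one h1
end

section
/- Let (X, μ, T) be a measure-preserving dynamical system with X ⊆ ℝ an interval and μ a probability measure, and suppose correlations decay as p for L¹ against BV: |∫ f∘Tⁿ · g dμ − ∫ f dμ ∫ g dμ| ≤ ‖f‖₁ ‖g‖_BV p(n) for all n ≥ 1 and all f ∈ L¹(μ), g of bounded variation. Suppose p(n) ≤ C/n^t for some C ≥ 0 and t > 0. Let (B_m)_{m≥1} be a sequence of balls (intervals) in X with μ(B_m) → 0. If μ(B_m) ≥ c/m^a for some c > 0 and some a < t/(1+t) and all m, then μ(E_ah) = 1. -/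
open MeasureTheory Filter Set
open scoped ENNReal

lemma jump_sum_le_two (v : ℕ → ℝ) (h01 : ∀ i, v i = 0 ∨ v i = 1)
    (hconv : ∀ i j k : ℕ, i ≤ j → j ≤ k → v i = 0 → v k = 0 → v j = 0) (n : ℕ) :
    ∑ i ∈ Finset.range n, edist (v (i+1)) (v i) ≤ 2 := by
  classical
  have key : ∀ i j k : ℕ, i < j → j < k → v i ≠ v (i+1) → v j ≠ v (j+1) → v k ≠ v (k+1) → False := by
    intro i j k hij hjk hi hj hk
    rcases h01 j with hj0 | hj1
    · have hj1' : v (j+1) = 1 := (h01 (j+1)).resolve_left (fun h => hj (hj0.trans h.symm))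
      rcases h01 k with hk0 | hk1
      · have := hconv j (j+1) k (Nat.le_succ j) hjk hj0 hk0
        rw [this] at hj1'; norm_num at hj1'
      · have hk0' : v (k+1) = 0 := (h01 (k+1)).resolve_right (fun h => hk (hk1.trans h.symm))
        have := hconv j (j+1) (k+1) (Nat.le_succ j) (by omega) hj0 hk0'
        rw [this] at hj1'; norm_num at hj1'
    · have hj0' : v (j+1) = 0 := (h01 (j+1)).resolve_right (fun h => hj (hj1.trans h.symm))
      rcases h01 i with hi0 | hi1
      · have := hconv i j (j+1) (by omega) (Nat.le_succ j) hi0 hj0'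
        rw [this] at hj1; norm_num at hj1
      · have hi0' : v (i+1) = 0 := (h01 (i+1)).resolve_right (fun h => hi (hi1.trans h.symm))
        have := hconv (i+1) j (j+1) (by omega) (Nat.le_succ j) hi0' hj0'
        rw [this] at hj1; norm_num at hj1
  set J : Finset ℕ := (Finset.range n).filter (fun i => v (i+1) ≠ v i) with hJ
  have hcard : J.card ≤ 2 := by
    by_contra h
    push_neg at h
    obtain ⟨x, yy, z, hx, hy, hz, hxy, hxz, hyz⟩ := Finset.two_lt_card_iff.1 h
    have hmem : ∀ w, w ∈ J → v w ≠ v (w+1) := by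
      intro w hw
      have := (Finset.mem_filter.1 hw).2
      exact fun h' => this h'.symm
    have hx' := hmem _ hx; have hy' := hmem _ hy; have hz' := hmem _ hz
    rcases Nat.lt_trichotomy x yy with h1 | h1 | h1
    · rcases Nat.lt_trichotomy yy z with h2 | h2 | h2
      · exact key x yy z h1 h2 hx' hy' hz'
      · exact hyz h2
      · rcases Nat.lt_trichotomy x z with h3 | h3 | h3
        · exact key x z yy h3 h2 hx' hz' hy'
        · exact hxz h3
        · exact key z x yy h3 h1 hz' hx' hy'
    · exact hxy h1
    · rcases Nat.lt_trichotomy x z with h2 | h2 | h2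
      · exact key yy x z h1 h2 hy' hx' hz'
      · exact hxz h2
      · rcases Nat.lt_trichotomy yy z with h3 | h3 | h3
        · exact key yy z x h3 h2 hy' hz' hx'
        · exact hyz h3
        · exact key z yy x h3 h1 hz' hy' hx'
  have hsum : ∑ i ∈ Finset.range n, edist (v (i+1)) (v i)
      = ∑ i ∈ J, edist (v (i+1)) (v i) := by
    rw [hJ, Finset.sum_filter_of_ne]
    intro i _ hne h
    rw [h] at hne
    simp at hne
  rw [hsum]
  calc ∑ i ∈ J, edist (v (i+1)) (v i) ≤ ∑ _i ∈ J, 1 := by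
        refine Finset.sum_le_sum fun i _ => ?_
        rcases h01 (i+1) with h1 | h1 <;> rcases h01 i with h2 | h2 <;>
          simp [h1, h2, edist_dist]
    _ = J.card := by simp
    _ ≤ 2 := by exact_mod_cast hcard

lemma evar_indicator_compl_le (S : Set ℝ) (hS : S.OrdConnected) (X : Set ℝ) :
    eVariationOn (Sᶜ.indicator (fun _ => (1:ℝ))) X ≤ 2 := by
  apply iSup_le
  rintro ⟨n, ⟨u, hu, -⟩⟩
  apply jump_sum_le_two (fun i => Sᶜ.indicator (fun _ => (1:ℝ)) (u i))
  · intro i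
    by_cases h : u i ∈ Sᶜ <;> simp [h]
  · intro i j k hij hjk h0 hk0
    have hi : u i ∈ S := by
      by_contra h'
      simp [Set.indicator_of_mem (Set.mem_compl h') (fun _ => (1:ℝ))] at h0
    have hk : u k ∈ S := by
      by_contra h'
      simp [Set.indicator_of_mem (Set.mem_compl h') (fun _ => (1:ℝ))] at hk0
    have : u j ∈ S := hS.out hi hk ⟨hu hij, hu hjk⟩
    simp [Set.indicator_of_notMem (by simp [this] : u j ∉ Sᶜ)]

set_option maxHeartbeats 2000000 in
/-- Polynomial decay of correlations for `L¹` against `BV` of order `t > 0` implies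
that the set of eventually always hitting points has full measure, provided
`μ (B m) ≥ c / m^a` for some `c > 0` and `a < t/(1+t)` and all `m ≥ 1`. -/
theorem eah_full_poly_mixing
    (X : Set ℝ) (hX : X.OrdConnected)
    (μ : Measure ℝ) [IsProbabilityMeasure μ] (hsupp : μ Xᶜ = 0)
    (T : ℝ → ℝ) (hT : MeasurePreserving T μ μ)
    (p : ℕ → ℝ) (C t : ℝ) (hC : 0 ≤ C) (ht : 0 < t)
    (hp : ∀ n : ℕ, 1 ≤ n → p n ≤ C / (n : ℝ) ^ t)
    (hcorr : ∀ n : ℕ, 1 ≤ n → ∀ f g : ℝ → ℝ, Integrable f μ →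
      eVariationOn g X ≠ ∞ →
      |(∫ x, f (T^[n] x) * g x ∂μ) - (∫ x, f x ∂μ) * ∫ x, g x ∂μ| ≤
        (∫ x, |f x| ∂μ) * bvNorm X μ g * p n)
    (y : ℕ → ℝ) (hy : ∀ m, y m ∈ X) (r : ℕ → ℝ) (hr : ∀ m, 0 ≤ r m)
    (B : ℕ → Set ℝ) (hB : ∀ m, B m = Metric.ball (y m) (r m) ∩ X)
    (hlim : Tendsto (fun m => μ (B m)) atTop (nhds 0))
    (c a : ℝ) (hc : 0 < c) (ha : a < t / (1 + t))
    (hbig : ∀ m : ℕ, 1 ≤ m → ENNReal.ofReal (c / (m : ℝ) ^ a) ≤ μ (B m)) :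
    μ (eahSet T B) = 1 := by
  classical
  have hXm : MeasurableSet X := hX.measurableSet
  have hTm : Measurable T := hT.measurable
  -- a must be positive (else μ (B m) is bounded below, contradicting hlim)
  rcases le_or_gt a 0 with ha0 | ha0
  · exfalso
    have hev : ∀ᶠ m in atTop, μ (B m) < ENNReal.ofReal c :=
      hlim.eventually_lt_const (by simp [ENNReal.ofReal_pos.2 hc])
    obtain ⟨m, hmlt, hm1⟩ := (hev.and (eventually_ge_atTop 1)).exists
    have hm1R : (1:ℝ) ≤ (m:ℝ) := by exact_mod_cast hm1
    have hpa : (0:ℝ) < (m:ℝ)^a := Real.rpow_pos_of_pos (by linarith) a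
    have hle1 : (m:ℝ)^a ≤ 1 := Real.rpow_le_one_of_one_le_of_nonpos hm1R ha0
    have hcle : c ≤ c / (m:ℝ)^a := by
      rw [le_div_iff₀ hpa]; nlinarith
    have : ENNReal.ofReal c ≤ μ (B m) :=
      le_trans (ENNReal.ofReal_le_ofReal hcle) (hbig m hm1)
    exact absurd this (not_le.2 hmlt)
  -- main case
  set b : ℝ := a / t with hbdef
  have hb : 0 < b := div_pos ha0 ht
  have hab : a + b < 1 := by
    have h1 : 0 < 1 + t := by linarith
    have h2 : a * (1 + t) < t := (lt_div_iff₀ h1).1 ha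
    have h3 : a + b = a * (1 + t) / t := by
      rw [hbdef]; field_simp; ring
    rw [h3, div_lt_one ht]
    exact h2
  set δ : ℝ := 1 - (a + b) with hδdef
  have hδ : 0 < δ := by rw [hδdef]; linarith
  set K₁ : ℝ := (6*C/c + 1) ^ (1/t) with hK₁def
  have hbase : (1:ℝ) ≤ 6*C/c + 1 := by
    have : 0 ≤ 6*C/c := by positivity
    linarith
  have hK₁ : 1 ≤ K₁ := Real.one_le_rpow hbase (by positivity)
  have hK₁pos : 0 < K₁ := by linarith
  have hK₁t : K₁ ^ t = 6*C/c + 1 := by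
    rw [hK₁def, ← Real.rpow_mul (le_trans zero_le_one hbase), one_div_mul_cancel ht.ne',
      Real.rpow_one]
  set nn : ℕ → ℕ := fun m => ⌈K₁ * (m:ℝ)^b⌉₊ with hnndef
  set D : ℕ → Set ℝ := fun m => {x | ∀ k, k < m → T^[k] x ∉ B m} with hDdef
  set c₄ : ℝ := c/(4*K₁) with hc₄def
  have hc₄ : 0 < c₄ := by rw [hc₄def]; positivity
  set bnd : ℕ → ℝ := fun m => Real.exp (c/2) * Real.exp (-c₄ * (m:ℝ)^δ) with hbnddef
  -- the per-m estimate
  have main : ∀ m : ℕ, 1 ≤ m → μ (D m) ≤ ENNReal.ofReal (bnd m) := by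
    intro m hm
    have hm1R : (1:ℝ) ≤ (m:ℝ) := by exact_mod_cast hm
    have hm0R : (0:ℝ) < (m:ℝ) := by linarith
    set S := Metric.ball (y m) (r m) with hSdef
    have hSo : S.OrdConnected := by rw [hSdef, Real.ball_eq_Ioo]; exact ordConnected_Ioo
    have hSm : MeasurableSet S := Metric.isOpen_ball.measurableSet
    set g : ℝ → ℝ := Sᶜ.indicator (fun _ => (1:ℝ)) with hgdef
    have hgvar : eVariationOn g X ≤ 2 := evar_indicator_compl_le S hSo X
    have hgvar' : eVariationOn g X ≠ ∞ := ne_top_of_le_ne_top (by norm_num) hgvar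
    have hgabs : ∀ x, |g x| = g x := fun x =>
      abs_of_nonneg (Set.indicator_nonneg (fun _ _ => zero_le_one) x)
    have hgint : ∫ x, |g x| ∂μ = (μ Sᶜ).toReal := by
      simp only [hgabs]
      rw [hgdef]
      exact integral_indicator_one hSm.compl
    have hbv0 : 0 ≤ bvNorm X μ g :=
      add_nonneg ENNReal.toReal_nonneg (integral_nonneg fun x => abs_nonneg _)
    have hbv3 : bvNorm X μ g ≤ 3 := by
      unfold bvNorm
      have h1 : (eVariationOn g X).toReal ≤ 2 := by
        have := ENNReal.toReal_mono (by norm_num : (2:ℝ≥0∞) ≠ ∞) hgvar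
        simpa using this
      have h2 : (μ Sᶜ).toReal ≤ 1 := by
        have h3 := ENNReal.toReal_mono (by norm_num : (1:ℝ≥0∞) ≠ ∞) (prob_le_one (μ := μ) (s := Sᶜ))
        simpa using h3
      rw [hgint]
      linarith
    -- the gap nn m
    have hn1 : 1 ≤ nn m := by
      rw [hnndef]
      simp only [Nat.one_le_ceil_iff]
      positivity
    have hnn0R : (0:ℝ) < (nn m : ℝ) := by exact_mod_cast hn1
    have hnlb : K₁ * (m:ℝ)^b ≤ (nn m : ℝ) := by
      simpa [hnndef] using Nat.le_ceil (K₁ * (m:ℝ)^b)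
    have hmb1 : (1:ℝ) ≤ K₁ * (m:ℝ)^b := by
      have h1 : (1:ℝ) ≤ (m:ℝ)^b := Real.one_le_rpow hm1R hb.le
      nlinarith
    have hnub : (nn m : ℝ) ≤ 2 * (K₁ * (m:ℝ)^b) := by
      have h2 : ((⌈K₁ * (m:ℝ)^b⌉₊ : ℝ)) < K₁ * (m:ℝ)^b + 1 :=
        Nat.ceil_lt_add_one (by positivity)
      have h3 : ((nn m : ℕ) : ℝ) = ((⌈K₁ * (m:ℝ)^b⌉₊ : ℕ) : ℝ) := by rw [hnndef]
      rw [h3]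
      linarith
    have hBfin : μ (B m) ≠ ∞ := measure_ne_top μ _
    have hming : c / (m:ℝ)^a ≤ (μ (B m)).toReal :=
      (ENNReal.ofReal_le_iff_le_toReal hBfin).1 (hbig m hm)
    -- the sets A j
    set A : ℕ → Set ℝ := fun j => ⋂ i ∈ Finset.range j, (T^[i * nn m]) ⁻¹' Sᶜ with hAdef
    have hAm : ∀ j, MeasurableSet (A j) := fun j =>
      Finset.measurableSet_biInter _ fun i _ => (hTm.iterate _) hSm.compl
    have hA0 : (μ (A 0)).toReal = 1 := by
      rw [hAdef]
      simp
    have hAs : ∀ j, A (j+1) = Sᶜ ∩ (T^[nn m]) ⁻¹' (A j) := by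
      intro j
      rw [hAdef]
      ext x
      simp only [mem_iInter, Finset.mem_range, mem_inter_iff, mem_preimage, mem_compl_iff]
      constructor
      · intro h
        refine ⟨by simpa using h 0 (Nat.succ_pos j), fun i hi => ?_⟩
        have hh := h (i+1) (by omega)
        rwa [show (i+1) * nn m = i * nn m + nn m by ring, Function.iterate_add_apply] at hh
      · rintro ⟨h0, h⟩ i hi
        rcases Nat.eq_zero_or_pos i with rfl | hipos
        · simpa using h0
        · obtain ⟨i', rfl⟩ : ∃ i', i = i' + 1 := ⟨i - 1, by omega⟩
          have hh := h i' (by omega)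
          rwa [show (i'+1) * nn m = i' * nn m + nn m by ring, Function.iterate_add_apply]
    -- one-step estimate
    set q : ℝ := (μ Sᶜ).toReal + 3 * (C / (nn m : ℝ)^t) with hqdef
    have hq0 : 0 ≤ q := by
      rw [hqdef]
      have : (0:ℝ) ≤ 3 * (C / (nn m : ℝ)^t) := by positivity
      linarith [ENNReal.toReal_nonneg (a := μ Sᶜ)]
    have hstep : ∀ j : ℕ, (μ (A (j+1))).toReal ≤ (μ (A j)).toReal * q := by
      intro j
      set f : ℝ → ℝ := (A j).indicator (fun _ => (1:ℝ)) with hfdef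
      have hfint : Integrable f μ := by
        rw [hfdef, integrable_indicator_iff (hAm j)]
        exact integrableOn_const (measure_ne_top μ _)
      have h1 : ∫ x, f x ∂μ = (μ (A j)).toReal := by
        rw [hfdef]; exact integral_indicator_one (hAm j)
      have h2 : ∫ x, |f x| ∂μ = (μ (A j)).toReal := by
        have habs : ∀ x, |f x| = f x := fun x =>
          abs_of_nonneg (Set.indicator_nonneg (fun _ _ => zero_le_one) x)
        simp only [habs]
        exact h1
      have h3 : ∫ x, g x ∂μ = (μ Sᶜ).toReal := by
        rw [hgdef]; exact integral_indicator_one hSm.compl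
      have h4 : (fun x => f (T^[nn m] x) * g x) = (A (j+1)).indicator (fun _ => (1:ℝ)) := by
        funext x
        rw [hAs j]
        by_cases hx1 : T^[nn m] x ∈ A j <;> by_cases hx2 : x ∈ Sᶜ <;>
          simp [hfdef, hgdef, hx1, hx2, Set.indicator_of_mem, Set.indicator_of_notMem,
            Set.mem_inter_iff]
      have h5 : ∫ x, f (T^[nn m] x) * g x ∂μ = (μ (A (j+1))).toReal := by
        rw [show (fun x => f (T^[nn m] x) * g x) = (A (j+1)).indicator (fun _ => (1:ℝ)) from h4]
        exact integral_indicator_one (hAm (j+1))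
      have hco := hcorr (nn m) hn1 f g hfint hgvar'
      rw [h2, h5] at hco
      rw [h1, h3] at hco
      have hpn : p (nn m) ≤ C / (nn m : ℝ)^t := hp (nn m) hn1
      have hXj : 0 ≤ (μ (A j)).toReal := ENNReal.toReal_nonneg
      have hCn : 0 ≤ C / (nn m : ℝ)^t := by positivity
      have e1 := (le_abs_self _).trans hco
      have e2 : (μ (A j)).toReal * bvNorm X μ g * p (nn m)
          ≤ (μ (A j)).toReal * (3 * (C / (nn m:ℝ)^t)) := by
        calc (μ (A j)).toReal * bvNorm X μ g * p (nn m)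
            ≤ (μ (A j)).toReal * bvNorm X μ g * (C / (nn m:ℝ)^t) :=
              mul_le_mul_of_nonneg_left hpn (mul_nonneg hXj hbv0)
          _ ≤ (μ (A j)).toReal * (3 * (C / (nn m:ℝ)^t)) := by
              rw [mul_assoc]
              exact mul_le_mul_of_nonneg_left
                (mul_le_mul_of_nonneg_right hbv3 hCn) hXj
      rw [hqdef, mul_add]
      linarith
    have hiter : ∀ j, (μ (A j)).toReal ≤ q ^ j := by
      intro j
      induction j with
      | zero => simp [hA0]
      | succ j ih =>
        calc (μ (A (j+1))).toReal ≤ (μ (A j)).toReal * q := hstep j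
          _ ≤ q ^ j * q := mul_le_mul_of_nonneg_right ih hq0
          _ = q ^ (j+1) := (pow_succ q j).symm
    -- comparison of q with 1 - (c/2)/m^a
    have hma : (0:ℝ) < (m:ℝ)^a := Real.rpow_pos_of_pos hm0R a
    have hq1 : q ≤ 1 - (c/2) / (m:ℝ)^a := by
      have hSc : (μ Sᶜ).toReal ≤ 1 - (μ (B m)).toReal := by
        have hadd : μ S + μ Sᶜ = 1 := by
          rw [measure_add_measure_compl hSm, measure_univ]
        have hBS : (μ (B m)).toReal ≤ (μ S).toReal :=
          ENNReal.toReal_mono (measure_ne_top μ S)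
            (measure_mono (by rw [hB m]; exact inter_subset_left))
        have hta := congrArg ENNReal.toReal hadd
        rw [ENNReal.toReal_add (measure_ne_top μ _) (measure_ne_top μ _)] at hta
        simp only [ENNReal.toReal_one] at hta
        linarith
      have h3C : 3 * (C / (nn m : ℝ)^t) ≤ (c/2) / (m:ℝ)^a := by
        have hnt : (6*C/c + 1) * (m:ℝ)^a ≤ (nn m : ℝ)^t := by
          have h1 : (K₁ * (m:ℝ)^b)^t ≤ (nn m:ℝ)^t :=
            Real.rpow_le_rpow (by positivity) hnlb ht.le
          have h2 : (K₁ * (m:ℝ)^b)^t = (6*C/c + 1) * (m:ℝ)^a := by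
            rw [Real.mul_rpow (by positivity) (by positivity), hK₁t,
              ← Real.rpow_mul hm0R.le,
              show b * t = a from by rw [hbdef]; field_simp]
          rw [← h2]
          exact h1
        have hpos : (0:ℝ) < (6*C/c + 1) * (m:ℝ)^a := by positivity
        have h4 : C / (nn m:ℝ)^t ≤ C / ((6*C/c+1) * (m:ℝ)^a) :=
          div_le_div_of_nonneg_left hC hpos hnt
        have h5 : 3 * (C / ((6*C/c+1) * (m:ℝ)^a)) ≤ (c/2)/(m:ℝ)^a := by
          have heq : 3 * (C / ((6*C/c+1) * (m:ℝ)^a)) = (3*C/(6*C/c+1)) / (m:ℝ)^a := by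
            field_simp
          rw [heq]
          have h6 : 3*C/(6*C/c+1) ≤ c/2 := by
            rw [div_le_iff₀ (by positivity)]
            have heq2 : c/2 * (6*C/c+1) = 3*C + c/2 := by field_simp; ring
            linarith
          gcongr
        linarith
      have hsplit : (c/2)/(m:ℝ)^a + (c/2)/(m:ℝ)^a = c/(m:ℝ)^a := by
        field_simp
        ring
      rw [hqdef]
      linarith
    -- D m is essentially contained in A N
    set N : ℕ := m / nn m with hNdef
    have hDA : μ (D m) ≤ μ (A N) := by
      have hDsub : D m ⊆ A N ∪ ⋃ k : ℕ, (T^[k]) ⁻¹' Xᶜ := by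
        intro x hx
        by_cases hall : ∀ k : ℕ, T^[k] x ∈ X
        · left
          rw [hAdef]
          simp only [mem_iInter, Finset.mem_range, mem_preimage, mem_compl_iff]
          intro i hi hS
          have hkm : i * nn m < m := by
            have h1 : (i+1) * nn m ≤ N * nn m := Nat.mul_le_mul_right _ hi
            have h2 : N * nn m ≤ m := Nat.div_mul_le_self m (nn m)
            have h3 : (i+1) * nn m = i * nn m + nn m := by ring
            omega
          have hxB : T^[i * nn m] x ∉ B m := hx _ hkm
          exact hxB (by rw [hB m]; exact ⟨hS, hall _⟩)
        · right
          push_neg at hall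
          obtain ⟨k, hk⟩ := hall
          exact mem_iUnion.2 ⟨k, hk⟩
      have hbad : μ (⋃ k : ℕ, (T^[k]) ⁻¹' Xᶜ) = 0 :=
        measure_iUnion_null fun k => by
          rw [(hT.iterate k).measure_preimage hXm.compl.nullMeasurableSet]
          exact hsupp
      calc μ (D m) ≤ μ (A N ∪ ⋃ k : ℕ, (T^[k]) ⁻¹' Xᶜ) := measure_mono hDsub
        _ ≤ μ (A N) + μ (⋃ k : ℕ, (T^[k]) ⁻¹' Xᶜ) := measure_union_le _ _
        _ = μ (A N) := by rw [hbad, add_zero]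
    -- assemble
    have hx0 : (0:ℝ) ≤ (c/2) / (m:ℝ)^a := by positivity
    have hq1' : (0:ℝ) ≤ 1 - (c/2)/(m:ℝ)^a := le_trans hq0 hq1
    have h6 : (μ (D m)).toReal ≤ q ^ N :=
      le_trans (ENNReal.toReal_mono (measure_ne_top μ _) hDA) (hiter N)
    have h7 : q ^ N ≤ (1 - (c/2)/(m:ℝ)^a) ^ N := pow_le_pow_left₀ hq0 hq1 N
    have h8 : (1 - (c/2)/(m:ℝ)^a) ^ N ≤ Real.exp (-((c/2)/(m:ℝ)^a)) ^ N := by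
      apply pow_le_pow_left₀ hq1'
      linarith [Real.add_one_le_exp (-((c/2)/(m:ℝ)^a))]
    have h9 : Real.exp (-((c/2)/(m:ℝ)^a)) ^ N = Real.exp (-((c/2)/(m:ℝ)^a) * N) := by
      rw [← Real.exp_nat_mul]
      ring_nf
    have hxN : c₄ * (m:ℝ)^δ - c/2 ≤ ((c/2)/(m:ℝ)^a) * (N:ℝ) := by
      have hmlt : (m:ℝ) < (nn m:ℝ) * ((N:ℝ) + 1) := by
        have h := Nat.lt_mul_div_succ m (by omega : 0 < nn m)
        rw [hNdef]
        exact_mod_cast h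
      have hN1 : (m:ℝ)/(nn m:ℝ) - 1 ≤ (N:ℝ) := by
        rw [div_sub_one hnn0R.ne', div_le_iff₀ hnn0R]
        nlinarith
      have step : c₄ * (m:ℝ)^δ ≤ ((c/2)/(m:ℝ)^a) * ((m:ℝ)/(nn m:ℝ)) := by
        have hprod : (m:ℝ)^δ * ((m:ℝ)^a * (m:ℝ)^b) = (m:ℝ) := by
          rw [← Real.rpow_add hm0R, ← Real.rpow_add hm0R,
            show δ + (a + b) = 1 from by rw [hδdef]; ring, Real.rpow_one]
        have hb0 : (0:ℝ) < (m:ℝ)^b := Real.rpow_pos_of_pos hm0R b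
        have hd0 : (0:ℝ) < (m:ℝ)^δ := Real.rpow_pos_of_pos hm0R δ
        have hrhs : ((c/2)/(m:ℝ)^a) * ((m:ℝ)/(nn m:ℝ))
            = (c*(m:ℝ))/(2*((m:ℝ)^a*(nn m:ℝ))) := by
          rw [div_div, div_mul_div_comm, mul_assoc]
        have hlhs : c₄ * (m:ℝ)^δ = (c*(m:ℝ)^δ)/(4*K₁) := by
          rw [hc₄def]; ring
        rw [hlhs, hrhs, div_le_div_iff₀ (by positivity) (by positivity)]
        have h2 : (m:ℝ)^a * (nn m:ℝ) ≤ (m:ℝ)^a * (2*(K₁*(m:ℝ)^b)) :=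
          mul_le_mul_of_nonneg_left hnub hma.le
        have h3 : (0:ℝ) ≤ 2*(c*(m:ℝ)^δ) := by positivity
        calc c*(m:ℝ)^δ*(2*((m:ℝ)^a*(nn m:ℝ)))
            = (2*(c*(m:ℝ)^δ)) * ((m:ℝ)^a*(nn m:ℝ)) := by ring
          _ ≤ (2*(c*(m:ℝ)^δ)) * ((m:ℝ)^a * (2*(K₁*(m:ℝ)^b))) :=
              mul_le_mul_of_nonneg_left h2 h3
          _ = c*((m:ℝ)^δ*((m:ℝ)^a*(m:ℝ)^b))*(4*K₁) := by ring
          _ = c*(m:ℝ)*(4*K₁) := by rw [hprod]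
      have step2 : ((c/2)/(m:ℝ)^a) * ((m:ℝ)/(nn m:ℝ) - 1) ≤ ((c/2)/(m:ℝ)^a) * (N:ℝ) :=
        mul_le_mul_of_nonneg_left hN1 hx0
      have step3 : (c/2)/(m:ℝ)^a ≤ c/2 :=
        div_le_self (by positivity) (Real.one_le_rpow hm1R ha0.le)
      have hmulsub : ((c/2)/(m:ℝ)^a) * ((m:ℝ)/(nn m:ℝ) - 1)
          = ((c/2)/(m:ℝ)^a) * ((m:ℝ)/(nn m:ℝ)) - (c/2)/(m:ℝ)^a := by ring
      linarith
    have hfinalR : (μ (D m)).toReal ≤ bnd m := by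
      rw [hbnddef]
      calc (μ (D m)).toReal ≤ Real.exp (-((c/2)/(m:ℝ)^a) * N) := by
            rw [← h9]; exact le_trans h6 (le_trans h7 h8)
        _ ≤ Real.exp (c/2 + -(c₄ * (m:ℝ)^δ)) := by
            apply Real.exp_le_exp.2
            nlinarith [hxN]
        _ = Real.exp (c/2) * Real.exp (-(c₄ * (m:ℝ)^δ)) := Real.exp_add _ _
        _ = Real.exp (c/2) * Real.exp (-c₄ * (m:ℝ)^δ) := by ring_nf
    calc μ (D m) = ENNReal.ofReal ((μ (D m)).toReal) :=
          (ENNReal.ofReal_toReal (measure_ne_top μ _)).symm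
      _ ≤ ENNReal.ofReal (bnd m) := ENNReal.ofReal_le_ofReal hfinalR
  -- summability of the bound
  have hsummable : Summable bnd := by
    rw [hbnddef]
    apply Summable.mul_left
    set k : ℕ := ⌈2/δ⌉₊ with hkdef
    have hk2 : 2 ≤ δ * (k:ℝ) := by
      have h1 : 2/δ ≤ (k:ℝ) := Nat.le_ceil _
      calc (2:ℝ) = δ * (2/δ) := by field_simp
        _ ≤ δ * k := by
            exact mul_le_mul_of_nonneg_left h1 hδ.le
    have hcomp : ∀ m : ℕ, Real.exp (-c₄ * ((m:ℝ)+1)^δ)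
        ≤ ((k.factorial : ℝ) / c₄^k) * (1/((m:ℝ)+1)^2) := by
      intro m
      set x : ℝ := (m:ℝ) + 1 with hxdef
      have hx1 : (1:ℝ) ≤ x := by
        rw [hxdef]; linarith [(Nat.cast_nonneg m : (0:ℝ) ≤ (m:ℝ))]
      have hx0 : (0:ℝ) < x := by linarith
      have h1 : (c₄ * x^δ)^k / (k.factorial : ℝ) ≤ Real.exp (c₄ * x^δ) := by
        apply Real.pow_div_factorial_le_exp
        positivity
      have h2 : x^(2:ℕ) ≤ (x^δ)^k := by
        rw [← Real.rpow_natCast (x^δ) k, ← Real.rpow_mul hx0.le, ← Real.rpow_natCast x 2]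
        exact Real.rpow_le_rpow_of_exponent_le hx1 (by push_cast; linarith)
      have hexp0 : (0:ℝ) < (c₄ * x^δ)^k / (k.factorial : ℝ) := by positivity
      calc Real.exp (-c₄ * x^δ) = (Real.exp (c₄ * x^δ))⁻¹ := by
            rw [← Real.exp_neg]; ring_nf
        _ ≤ ((c₄ * x^δ)^k / (k.factorial : ℝ))⁻¹ := by
            apply inv_anti₀ hexp0 h1
        _ = (k.factorial : ℝ) / (c₄^k * (x^δ)^k) := by
            rw [inv_div, mul_pow]
        _ ≤ (k.factorial : ℝ) / (c₄^k * x^(2:ℕ)) := by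
            have hd : c₄^k * x^(2:ℕ) ≤ c₄^k * (x^δ)^k :=
              mul_le_mul_of_nonneg_left h2 (by positivity)
            apply div_le_div_of_nonneg_left (by positivity) (by positivity) hd
        _ = ((k.factorial : ℝ) / c₄^k) * (1/x^2) := by
            field_simp
    have hbase : Summable (fun m : ℕ => ((k.factorial : ℝ) / c₄^k) * (1/((m:ℝ)+1)^2)) := by
      apply Summable.mul_left
      have h0 : Summable (fun m : ℕ => 1/(m:ℝ)^2) := by
        simpa using summable_one_div_nat_pow.2 (by norm_num : 1 < 2)
      have := (summable_nat_add_iff 1).2 h0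
      simpa using this
    have hsub : Summable (fun m : ℕ => Real.exp (-c₄ * ((m:ℝ)+1)^δ)) :=
      Summable.of_nonneg_of_le (fun m => (Real.exp_pos _).le) hcomp hbase
    rw [← summable_nat_add_iff 1]
    exact hsub.congr (fun m => by push_cast; ring_nf)
  -- conclude via Borel-Cantelli
  have htsum : (∑' m, μ (D m)) ≠ ∞ := by
    have h0 : ∀ m, μ (D m) ≤ ENNReal.ofReal (bnd m) := by
      intro m
      rcases Nat.eq_zero_or_pos m with rfl | hm
      · have h1 : μ (D 0) ≤ 1 := prob_le_one
        have h2 : (1:ℝ≥0∞) ≤ ENNReal.ofReal (bnd 0) := by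
          rw [ENNReal.one_le_ofReal, hbnddef]
          simp only [Nat.cast_zero, Real.zero_rpow hδ.ne', mul_zero, neg_zero, Real.exp_zero,
            mul_one]
          exact Real.one_le_exp (by positivity)
        exact h1.trans h2
      · exact main m hm
    have h1 : (∑' m, μ (D m)) ≤ ∑' m, ENNReal.ofReal (bnd m) := ENNReal.tsum_le_tsum h0
    have h2 : (∑' m, ENNReal.ofReal (bnd m)) = ENNReal.ofReal (∑' m, bnd m) := by
      rw [ENNReal.ofReal_tsum_of_nonneg (fun m => by positivity) hsummable]
    exact ne_top_of_le_ne_top (by rw [h2]; exact ENNReal.ofReal_ne_top) h1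
  have hBC : μ (limsup D atTop) = 0 := measure_limsup_atTop_eq_zero htsum
  have hDm : ∀ m, MeasurableSet (D m) := by
    intro m
    have : D m = ⋂ k ∈ Finset.range m, (T^[k]) ⁻¹' (B m)ᶜ := by
      ext x; simp [hDdef]
    rw [this]
    refine Finset.measurableSet_biInter _ fun k _ => ?_
    exact (hTm.iterate k) ((((hB m) ▸ (measurableSet_ball.inter hXm)) : MeasurableSet (B m)).compl)
  have hlimsup_meas : MeasurableSet (limsup D atTop) := by
    rw [limsup_eq_iInf_iSup_of_nat]
    exact MeasurableSet.iInter fun n => MeasurableSet.iUnion fun i =>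
      MeasurableSet.iUnion fun _ => hDm i
  have hcompl : eahSet T B = (limsup D atTop)ᶜ := by
    ext x
    simp only [eahSet, mem_setOf_eq, mem_compl_iff, mem_limsup_iff_frequently_mem,
      Filter.Frequently, not_not, eventually_atTop]
    constructor
    · intro ⟨m₀, h⟩
      refine ⟨m₀, fun m hm => ?_⟩
      obtain ⟨k, hk, hkB⟩ := h m hm
      simp only [hDdef, mem_setOf_eq, not_forall, not_not]
      exact ⟨k, hk, hkB⟩
    · intro ⟨m₀, h⟩
      refine ⟨m₀, fun m hm => ?_⟩
      have := h m hm
      simp only [hDdef, mem_setOf_eq, not_forall, not_not] at this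
      obtain ⟨k, hk, hkB⟩ := this
      exact ⟨k, hk, hkB⟩
  rw [hcompl, measure_compl hlimsup_meas (measure_ne_top μ _), hBC, measure_univ]
  simp
end
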